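/- (Key lemma in the proof of Proposition 1.) Let G be a simple graph on a finite vertex set V, and let (μ⁽¹⁾, Σ⁽¹⁾), (μ⁽²⁾, Σ⁽²⁾) be two pairs of mean vectors and symmetric positive definite covariance matrices with (Σ⁽¹⁾)⁻¹ ∈ S⁺(G) and (Σ⁽²⁾)⁻¹ ∈ S⁺(G). Let D ⊆ V be a seed set for the two pairs, and let A, S ⊆ V be such that A is nonempty, S is nonempty, A ∩ S = ∅, A ∩ D = ∅, and S separates A from D in G. Then the conditional parameters of X_A given X_S coincide for the two pairs, i.e. the triple (μ⁽ˡ⁾_A − Σ⁽ˡ⁾_{A,S} (Σ⁽ˡ⁾_S)⁻¹ μ⁽ˡ⁾_S, Σ⁽ˡ⁾_{A,S} (Σ⁽ˡ⁾_S)⁻¹, Σ⁽ˡ⁾_A − Σ⁽ˡ⁾_{A,S} (Σ⁽ˡ⁾_S)⁻¹ Σ⁽ˡ⁾_{S,A}) is the same for l = 1 and l = 2. -/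

import Mathlib

open Matrix

/-- Sub-matrix of `M` with rows indexed by `A` and columns indexed by `B`. -/
def msub {V : Type*} [Fintype V] [DecidableEq V] (M : Matrix V V ℝ) (A B : Finset V) :
    Matrix A B ℝ :=
  M.submatrix (fun a => a.1) (fun b => b.1)

/-- Principal sub-matrix of `M` indexed by the finset `A`. -/
def psub {V : Type*} [Fintype V] [DecidableEq V] (M : Matrix V V ℝ) (A : Finset V) :
    Matrix A A ℝ :=
  msub M A A

/-- Sub-vector of `x` indexed by the finset `A`. -/
def rest {V : Type*} (x : V → ℝ) (A : Finset V) : A → ℝ := fun a => x a.1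

/-- The conditional parameters of `X_B` given `X_S` for a Gaussian vector with
parameters `(μ, Σ)`: the triple
`(μ_B − Σ_{B,S} Σ_S⁻¹ μ_S, Σ_{B,S} Σ_S⁻¹, Σ_B − Σ_{B,S} Σ_S⁻¹ Σ_{S,B})`. -/
noncomputable def condParams {V : Type*} [Fintype V] [DecidableEq V]
    (μ : V → ℝ) (Sg : Matrix V V ℝ) (B S : Finset V) :
    (B → ℝ) × Matrix B S ℝ × Matrix B B ℝ :=
  (rest μ B - (msub Sg B S * (psub Sg S)⁻¹) *ᵥ rest μ S,
   msub Sg B S * (psub Sg S)⁻¹,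
   psub Sg B - msub Sg B S * (psub Sg S)⁻¹ * msub Sg S B)

/-- `D` is a seed set for the pairs `(μ⁽¹⁾, Σ⁽¹⁾)`, `(μ⁽²⁾, Σ⁽²⁾)` if the conditional
parameters of `X_{V∖D}` given `X_D` coincide for the two pairs.  (For `D = V` the
condition is vacuous, and for `D = ∅` it amounts to equality of the two pairs.) -/
def IsSeedSet {V : Type*} [Fintype V] [DecidableEq V]
    (μ₁ : V → ℝ) (S₁ : Matrix V V ℝ) (μ₂ : V → ℝ) (S₂ : Matrix V V ℝ)
    (D : Finset V) : Prop :=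
  condParams μ₁ S₁ Dᶜ D = condParams μ₂ S₂ Dᶜ D

/-- `K ∈ S⁺(G)`: `K` is symmetric positive definite with `K v w = 0` for all distinct
vertices `v, w` that are not adjacent in `G`. -/
def SPlus {V : Type*} [Fintype V] (G : SimpleGraph V) (K : Matrix V V ℝ) : Prop :=
  K.IsSymm ∧ K.PosDef ∧ ∀ v w : V, v ≠ w → ¬ G.Adj v w → K v w = 0

/-- `S` separates `A` from `B` in `G`: every walk from a vertex of `A∖S` to a vertex of
`B∖S` passes through a vertex of `S`. -/
def Separates {V : Type*} (G : SimpleGraph V) (A B S : Finset V) : Prop :=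
  ∀ a b : V, a ∈ A → a ∉ S → b ∈ B → b ∉ S →
    ∀ w : G.Walk a b, ∃ s ∈ S, s ∈ w.support

section Aux
variable {V : Type*} [Fintype V] [DecidableEq V]

set_option linter.unusedSectionVars false

lemma sum_restrict (A : Finset V) (g : V → ℝ) (hg : ∀ u, u ∉ A → g u = 0) :
    ∑ v, g v = ∑ i : ↑A, g i.1 := by
  rw [Finset.sum_coe_sort]
  exact (Finset.sum_subset (Finset.subset_univ _) (fun x _ hx => hg x hx)).symm

lemma sum_split (T S : Finset V) (hTS : Disjoint T S) (f : V → ℝ)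
    (hf : ∀ u, u ∉ T → u ∉ S → f u = 0) :
    (∑ i : ↑T, f i) + (∑ i : ↑S, f i) = ∑ v, f v := by
  rw [Finset.sum_coe_sort, Finset.sum_coe_sort, ← Finset.sum_union hTS]
  exact Finset.sum_subset (Finset.subset_univ _) (fun x _ hx =>
    hf x (fun h => hx (Finset.mem_union_left _ h))
      (fun h => hx (Finset.mem_union_right _ h)))

lemma psub_posDef {M : Matrix V V ℝ} (hM : M.PosDef) (A : Finset V) :
    (psub M A).PosDef := by
  exact hM.submatrix Subtype.val_injective

lemma key (μ : V → ℝ) (Sg : Matrix V V ℝ) (hSg : Sg.PosDef) (T S : Finset V)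
    (hTS : Disjoint T S)
    (hK0 : ∀ t ∈ T, ∀ u, u ∉ T → u ∉ S → Sg⁻¹ t u = 0) :
    psub Sg⁻¹ T * (msub Sg T S * (psub Sg S)⁻¹) = -(msub Sg⁻¹ T S) ∧
    psub Sg⁻¹ T * (psub Sg T - msub Sg T S * (psub Sg S)⁻¹ * msub Sg S T) = 1 ∧
    psub Sg⁻¹ T *ᵥ (rest μ T - (msub Sg T S * (psub Sg S)⁻¹) *ᵥ rest μ S)
      = rest (Sg⁻¹ *ᵥ μ) T := by
  set K := Sg⁻¹ with hK
  have hKS : K * Sg = 1 := Matrix.nonsing_inv_mul Sg hSg.det_pos.ne'.isUnit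
  have hSinv : psub Sg S * (psub Sg S)⁻¹ = 1 :=
    Matrix.mul_nonsing_inv _ (psub_posDef hSg S).det_pos.ne'.isUnit
  have e1 : psub K T * msub Sg T S = -(msub K T S * psub Sg S) := by
    ext i j
    have hs := sum_split T S hTS (fun v => K i.1 v * Sg v j.1)
      (fun u hu1 hu2 => by show K i.1 u * _ = 0; rw [hK0 i.1 i.2 u hu1 hu2, zero_mul])
    have h1 : ∑ v, K i.1 v * Sg v j.1 = 0 := by
      have h2 : (K * Sg) i.1 j.1 = (1 : Matrix V V ℝ) i.1 j.1 := by rw [hKS]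
      rw [Matrix.mul_apply] at h2
      rw [h2, Matrix.one_apply_ne]
      exact fun h => (Finset.disjoint_left.mp hTS i.2) (h ▸ j.2)
    have hL : (psub K T * msub Sg T S) i j = ∑ k : ↑T, K i.1 k.1 * Sg k.1 j.1 := by
      simp [psub, msub, Matrix.mul_apply]
    have hR : (msub K T S * psub Sg S) i j = ∑ k : ↑S, K i.1 k.1 * Sg k.1 j.1 := by
      simp [psub, msub, Matrix.mul_apply]
    rw [Matrix.neg_apply, hL, hR]
    linarith [hs, h1]
  have e1' : psub K T * (msub Sg T S * (psub Sg S)⁻¹) = -(msub K T S) := by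
    calc psub K T * (msub Sg T S * (psub Sg S)⁻¹)
        = (psub K T * msub Sg T S) * (psub Sg S)⁻¹ := (Matrix.mul_assoc _ _ _).symm
      _ = -(msub K T S * psub Sg S) * (psub Sg S)⁻¹ := by rw [e1]
      _ = -(msub K T S * (psub Sg S * (psub Sg S)⁻¹)) := by
          rw [Matrix.neg_mul, Matrix.mul_assoc]
      _ = -(msub K T S) := by rw [hSinv, Matrix.mul_one]
  have e2 : psub K T * psub Sg T + msub K T S * msub Sg S T = 1 := by
    ext i j
    have hs := sum_split T S hTS (fun v => K i.1 v * Sg v j.1)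
      (fun u hu1 hu2 => by show K i.1 u * _ = 0; rw [hK0 i.1 i.2 u hu1 hu2, zero_mul])
    have h1 : ∑ v, K i.1 v * Sg v j.1 = (1 : Matrix V V ℝ) i.1 j.1 := by
      have h2 : (K * Sg) i.1 j.1 = (1 : Matrix V V ℝ) i.1 j.1 := by rw [hKS]
      rw [Matrix.mul_apply] at h2
      exact h2
    have hL : (psub K T * psub Sg T) i j = ∑ k : ↑T, K i.1 k.1 * Sg k.1 j.1 := by
      simp [psub, msub, Matrix.mul_apply]
    have hR : (msub K T S * msub Sg S T) i j = ∑ k : ↑S, K i.1 k.1 * Sg k.1 j.1 := by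
      simp [psub, msub, Matrix.mul_apply]
    have hone : (1 : Matrix ↑T ↑T ℝ) i j = (1 : Matrix V V ℝ) i.1 j.1 := by
      rcases eq_or_ne i j with rfl | h
      · simp
      · rw [Matrix.one_apply_ne h, Matrix.one_apply_ne (fun e => h (Subtype.ext e))]
    rw [Matrix.add_apply, hL, hR, hone]
    linarith [hs, h1]
  have e2' : psub K T * (psub Sg T - msub Sg T S * (psub Sg S)⁻¹ * msub Sg S T) = 1 := by
    have h3 : psub K T * (msub Sg T S * (psub Sg S)⁻¹ * msub Sg S T)
        = -(msub K T S * msub Sg S T) := by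
      rw [← Matrix.mul_assoc, e1', Matrix.neg_mul]
    rw [Matrix.mul_sub, h3, sub_neg_eq_add, e2]
  have e3 : psub K T *ᵥ rest μ T + msub K T S *ᵥ rest μ S = rest (K *ᵥ μ) T := by
    funext i
    have hs := sum_split T S hTS (fun v => K i.1 v * μ v)
      (fun u hu1 hu2 => by show K i.1 u * _ = 0; rw [hK0 i.1 i.2 u hu1 hu2, zero_mul])
    have hL : (psub K T *ᵥ rest μ T) i = ∑ k : ↑T, K i.1 k.1 * μ k.1 := by
      simp [psub, msub, rest, Matrix.mulVec, dotProduct]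
    have hR : (msub K T S *ᵥ rest μ S) i = ∑ k : ↑S, K i.1 k.1 * μ k.1 := by
      simp [psub, msub, rest, Matrix.mulVec, dotProduct]
    have hT : rest (K *ᵥ μ) T i = ∑ v, K i.1 v * μ v := by
      simp [rest, Matrix.mulVec, dotProduct]
    rw [Pi.add_apply, hL, hR, hT]
    simpa using hs
  refine ⟨e1', e2', ?_⟩
  rw [Matrix.mulVec_sub, Matrix.mulVec_mulVec, e1', Matrix.neg_mulVec, sub_neg_eq_add, e3]

lemma cancel_left {n m : Type*} [Fintype n] [DecidableEq n] {M : Matrix n n ℝ}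
    (h : IsUnit M.det) {X Y : Matrix n m ℝ} (hXY : M * X = M * Y) : X = Y := by
  have h2 := congrArg (fun Z => M⁻¹ * Z) hXY
  simpa [← Matrix.mul_assoc, Matrix.nonsing_inv_mul _ h] using h2

lemma cancel_vec {n : Type*} [Fintype n] [DecidableEq n] {M : Matrix n n ℝ}
    (h : IsUnit M.det) {x y : n → ℝ} (hxy : M *ᵥ x = M *ᵥ y) : x = y := by
  have h2 := congrArg (fun z => M⁻¹ *ᵥ z) hxy
  simpa [Matrix.mulVec_mulVec, Matrix.nonsing_inv_mul _ h] using h2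


end Aux

/-- Key lemma in the proof of Proposition 1: if `D` is a seed set for two Gaussian
graphical distributions Markov with respect to `G`, and `S` is a nonempty set disjoint
from the nonempty set `A` which separates `A` from `D` in `G` (with `A ∩ D = ∅`), then
the conditional parameters of `X_A` given `X_S` coincide for the two distributions. -/
theorem stmt_13 {V : Type*} [Fintype V] [DecidableEq V]
    (G : SimpleGraph V)
    (μ₁ μ₂ : V → ℝ) (S₁ S₂ : Matrix V V ℝ)
    (h₁ : S₁.PosDef) (h₂ : S₂.PosDef)
    (hG₁ : SPlus G S₁⁻¹) (hG₂ : SPlus G S₂⁻¹)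
    (D : Finset V) (hseed : IsSeedSet μ₁ S₁ μ₂ S₂ D)
    (A S : Finset V) (hA : A.Nonempty) (hS : S.Nonempty)
    (hAS : Disjoint A S) (hAD : Disjoint A D)
    (hsep : Separates G A D S) :
    condParams μ₁ S₁ A S = condParams μ₂ S₂ A S := by
  classical
  -- extract seed-set information
  have hm : (condParams μ₁ S₁ Dᶜ D).1 = (condParams μ₂ S₂ Dᶜ D).1 := by rw [hseed]
  have hB : (condParams μ₁ S₁ Dᶜ D).2.1 = (condParams μ₂ S₂ Dᶜ D).2.1 := by rw [hseed]
  have hC : (condParams μ₁ S₁ Dᶜ D).2.2 = (condParams μ₂ S₂ Dᶜ D).2.2 := by rw [hseed]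
  simp only [condParams] at hm hB hC
  have hDdisj : Disjoint (Dᶜ : Finset V) D := disjoint_compl_left
  have hvac : ∀ (K : Matrix V V ℝ), ∀ t ∈ (Dᶜ : Finset V), ∀ u, u ∉ (Dᶜ : Finset V) →
      u ∉ D → K t u = 0 := by
    intro K t _ u hu1 hu2
    exact absurd (by simpa using hu1) hu2
  obtain ⟨d1a, d1b, d1c⟩ := key μ₁ S₁ h₁ Dᶜ D hDdisj (hvac _)
  obtain ⟨d2a, d2b, d2c⟩ := key μ₂ S₂ h₂ Dᶜ D hDdisj (hvac _)
  have hPD : psub S₁⁻¹ Dᶜ = psub S₂⁻¹ Dᶜ := by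
    rw [← Matrix.inv_eq_left_inv d1b, ← Matrix.inv_eq_left_inv d2b, hC]
  have hMD : msub S₁⁻¹ Dᶜ D = msub S₂⁻¹ Dᶜ D := by
    have h := d1a
    rw [hPD, hB, d2a] at h
    exact (neg_injective h).symm
  have hhD : rest (S₁⁻¹ *ᵥ μ₁) Dᶜ = rest (S₂⁻¹ *ᵥ μ₂) Dᶜ := by
    rw [← d1c, ← d2c, hPD, hm]
  -- the set T of vertices reachable from A avoiding S
  set T : Finset V := Finset.univ.filter
    (fun v => v ∉ S ∧ ∃ a ∈ A, ∃ w : G.Walk a v, ∀ x ∈ w.support, x ∉ S) with hTdef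
  have hmemT : ∀ v, v ∈ T ↔
      (v ∉ S ∧ ∃ a ∈ A, ∃ w : G.Walk a v, ∀ x ∈ w.support, x ∉ S) := by
    intro v; simp [hTdef]
  have hAT : A ⊆ T := by
    intro a ha
    have haS : a ∉ S := Finset.disjoint_left.mp hAS ha
    exact (hmemT a).2 ⟨haS, a, ha, SimpleGraph.Walk.nil, by simpa using haS⟩
  have hTS : Disjoint T S := Finset.disjoint_left.mpr (fun v hv => ((hmemT v).1 hv).1)
  have hTDc : ∀ t ∈ T, t ∈ Dᶜ := by
    intro t ht
    rw [Finset.mem_compl]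
    intro htD
    obtain ⟨htS, a, haA, w, hw⟩ := (hmemT t).1 ht
    obtain ⟨s, hsS, hsw⟩ := hsep a t haA (Finset.disjoint_left.mp hAS haA) htD htS w
    exact hw s hsw hsS
  have hK0 : ∀ (K : Matrix V V ℝ), SPlus G K → ∀ t ∈ T, ∀ u, u ∉ T → u ∉ S → K t u = 0 := by
    intro K hKG t ht u hu1 hu2
    have htu : t ≠ u := fun h => hu1 (h ▸ ht)
    refine hKG.2.2 t u htu (fun hadj => hu1 ?_)
    obtain ⟨htS, a, haA, w, hw⟩ := (hmemT t).1 ht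
    refine (hmemT u).2 ⟨hu2, a, haA, w.concat hadj, ?_⟩
    intro x hx
    rw [SimpleGraph.Walk.support_concat] at hx
    rcases List.mem_append.1 hx with h | h
    · exact hw x h
    · rw [List.mem_singleton.1 h]; exact hu2
  obtain ⟨k1a, k1b, k1c⟩ := key μ₁ S₁ h₁ T S hTS (hK0 _ hG₁)
  obtain ⟨k2a, k2b, k2c⟩ := key μ₂ S₂ h₂ T S hTS (hK0 _ hG₂)
  -- equality of the concentration data indexed by T
  have hPT : psub S₁⁻¹ T = psub S₂⁻¹ T := by
    ext i j
    have h := congrFun (congrFun hPD ⟨i.1, hTDc _ i.2⟩) ⟨j.1, hTDc _ j.2⟩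
    simpa [psub, msub] using h
  have hMTS : msub S₁⁻¹ T S = msub S₂⁻¹ T S := by
    ext i j
    by_cases hjD : j.1 ∈ D
    · have h := congrFun (congrFun hMD ⟨i.1, hTDc _ i.2⟩) ⟨j.1, hjD⟩
      simpa [msub] using h
    · have h := congrFun (congrFun hPD ⟨i.1, hTDc _ i.2⟩) ⟨j.1, Finset.mem_compl.2 hjD⟩
      simpa [psub, msub] using h
  have hhT : rest (S₁⁻¹ *ᵥ μ₁) T = rest (S₂⁻¹ *ᵥ μ₂) T := by
    funext i
    have h := congrFun hhD ⟨i.1, hTDc _ i.2⟩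
    simpa [rest] using h
  -- cancellation to get equality of the conditional parameters at the level of T
  have hdet : IsUnit (psub S₁⁻¹ T).det := (psub_posDef hG₁.2.1 T).det_pos.ne'.isUnit
  have hBT : msub S₁ T S * (psub S₁ S)⁻¹ = msub S₂ T S * (psub S₂ S)⁻¹ := by
    refine cancel_left hdet ?_
    rw [k1a, hMTS, hPT, k2a]
  have hCT : psub S₁ T - msub S₁ T S * (psub S₁ S)⁻¹ * msub S₁ S T
      = psub S₂ T - msub S₂ T S * (psub S₂ S)⁻¹ * msub S₂ S T := by
    refine cancel_left hdet ?_
    rw [k1b, hPT, k2b]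
  have hmTv : rest μ₁ T - (msub S₁ T S * (psub S₁ S)⁻¹) *ᵥ rest μ₁ S
      = rest μ₂ T - (msub S₂ T S * (psub S₂ S)⁻¹) *ᵥ rest μ₂ S := by
    refine cancel_vec hdet ?_
    rw [k1c, hhT, hPT, k2c]
  -- restrict from T to A
  unfold condParams
  refine congrArg₂ Prod.mk ?_ (congrArg₂ Prod.mk ?_ ?_)
  · funext i
    have h1 : ∀ (μ : V → ℝ) (Sg : Matrix V V ℝ),
        (rest μ A - (msub Sg A S * (psub Sg S)⁻¹) *ᵥ rest μ S) i
          = (rest μ T - (msub Sg T S * (psub Sg S)⁻¹) *ᵥ rest μ S) ⟨i.1, hAT i.2⟩ := by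
      intro μ Sg
      simp [rest, msub, Matrix.mulVec, dotProduct, Matrix.mul_apply]
    rw [h1 μ₁ S₁, h1 μ₂ S₂, hmTv]
  · ext i j
    have h2 : ∀ (Sg : Matrix V V ℝ),
        (msub Sg A S * (psub Sg S)⁻¹) i j
          = (msub Sg T S * (psub Sg S)⁻¹) ⟨i.1, hAT i.2⟩ j := by
      intro Sg
      simp [msub, Matrix.mul_apply]
    rw [h2 S₁, h2 S₂, hBT]
  · ext i j
    have h3 : ∀ (Sg : Matrix V V ℝ),
        (psub Sg A - msub Sg A S * (psub Sg S)⁻¹ * msub Sg S A) i j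
          = (psub Sg T - msub Sg T S * (psub Sg S)⁻¹ * msub Sg S T)
              ⟨i.1, hAT i.2⟩ ⟨j.1, hAT j.2⟩ := by
      intro Sg
      simp [psub, msub, Matrix.sub_apply, Matrix.mul_apply]
    rw [h3 S₁, h3 S₂, hCT]
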